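/- Let b ≥ 2, let φ ∈ AM_{g,b,p} and let l ∈ {1,…,b−1}. Then there exists w_l ∈ Σ_{g,b,p} with (z_l^{-1})^φ = w_l^{-1} z_l^{-1} w_l, and for any such w_l one has e_l^φ ∈ w_l^{-1}⟨z_l⟩e_l, i.e. e_l^φ = w_l^{-1} z_l^{r} e_l for some r ∈ ℤ. -/

import Mathlib

namespace Paper

open scoped commutatorElement

/-- Generators of `Σ_{g,b,p} ∗ F(e_1,…,e_{b-1})`:
`x_1,…,x_g`, `y_1,…,y_g`, `z_1,…,z_{b-1}`, `t_1,…,t_p`, `e_1,…,e_{b-1}`. -/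
inductive GenB (g b p : ℕ) : Type
  | x : Fin g → GenB g b p
  | y : Fin g → GenB g b p
  | z : Fin (b - 1) → GenB g b p
  | t : Fin p → GenB g b p
  | e : Fin (b - 1) → GenB g b p
  deriving DecidableEq

/-- The free group `Σ_{g,b,p} ∗ F(e_1,…,e_{b-1})`. -/
abbrev Gam (g b p : ℕ) := FreeGroup (GenB g b p)

def Xb (g b p : ℕ) (i : Fin g) : Gam g b p := FreeGroup.of (GenB.x i)
def Yb (g b p : ℕ) (i : Fin g) : Gam g b p := FreeGroup.of (GenB.y i)
def Zb (g b p : ℕ) (l : Fin (b - 1)) : Gam g b p := FreeGroup.of (GenB.z l)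
def Tb (g b p : ℕ) (k : Fin p) : Gam g b p := FreeGroup.of (GenB.t k)
def Eb (g b p : ℕ) (l : Fin (b - 1)) : Gam g b p := FreeGroup.of (GenB.e l)

/-- `Σ_{g,b,p}`, the free factor generated by the `x`'s, `y`'s, `z`'s and
`t`'s. -/
def SigSub (g b p : ℕ) : Subgroup (Gam g b p) :=
  Subgroup.closure {w : Gam g b p |
    (∃ i, w = Xb g b p i) ∨ (∃ i, w = Yb g b p i) ∨
    (∃ l, w = Zb g b p l) ∨ (∃ k, w = Tb g b p k)}

/-- `[x_1,y_1]⋯[x_g,y_g]·z_1⋯z_{b-1}·t_1⋯t_p`. -/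
def bword (g b p : ℕ) : Gam g b p :=
  (List.ofFn fun i : Fin g => ⁅Xb g b p i, Yb g b p i⁆).prod *
    (List.ofFn fun l : Fin (b - 1) => Zb g b p l).prod *
    (List.ofFn fun k : Fin p => Tb g b p k).prod

/-- Membership in the algebraic mapping-class group `AM_{g,b,p}`:
automorphisms of `Σ_{g,b,p} ∗ F(e_1,…,e_{b-1})` mapping `Σ_{g,b,p}` to itself,
fixing `[x_1,y_1]⋯[x_g,y_g]·z_1⋯z_{b-1}·t_1⋯t_p`, fixing each
`e_l⁻¹ z_l⁻¹ e_l`, and permuting the conjugacy classes `{[t_1⁻¹],…,[t_p⁻¹]}`. -/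
def IsAMb {g b p : ℕ} (φ : Gam g b p ≃* Gam g b p) : Prop :=
  (SigSub g b p).map φ.toMonoidHom = SigSub g b p ∧
  φ (bword g b p) = bword g b p ∧
  (∀ l : Fin (b - 1),
    φ ((Eb g b p l)⁻¹ * (Zb g b p l)⁻¹ * Eb g b p l) =
      (Eb g b p l)⁻¹ * (Zb g b p l)⁻¹ * Eb g b p l) ∧
  ∃ π : Equiv.Perm (Fin p), ∀ k : Fin p,
    IsConj ((Tb g b p (π k))⁻¹) (φ ((Tb g b p k)⁻¹))



private lemma noncomm3 : ¬ Commute (Equiv.swap (0:Fin 3) 1) (Equiv.swap (1:Fin 3) 2) := by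
  intro h
  have h0 := DFunLike.congr_fun h 0
  simp [Equiv.Perm.mul_apply, Equiv.swap_apply_def] at h0

private lemma isFreeGroup_closure_range (H : Type*) [Group H] [IsFreeGroup H] :
    Subgroup.closure (Set.range (IsFreeGroup.of : IsFreeGroup.Generators H → H)) = ⊤ := by
  have h1 : (Set.range (IsFreeGroup.of : IsFreeGroup.Generators H → H))
      = (IsFreeGroup.mulEquiv H).toMonoidHom '' Set.range FreeGroup.of := by
    rw [← Set.range_comp]; rfl
  rw [h1, ← MonoidHom.map_closure, FreeGroup.closure_range_of]
  exact Subgroup.map_top_of_surjective _ (IsFreeGroup.mulEquiv H).surjective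

private lemma exists_zpow_of_comm (H : Type*) [Group H] [IsFreeGroup H]
    (hcomm : ∀ x y : H, Commute x y) : ∃ d : H, ∀ h : H, ∃ n : ℤ, h = d ^ n := by
  by_cases hs : ∃ s t : IsFreeGroup.Generators H, s ≠ t
  · obtain ⟨s, t, hst⟩ := hs
    exfalso
    classical
    set f : H →* Equiv.Perm (Fin 3) := IsFreeGroup.lift
      (fun x => if x = s then Equiv.swap 0 1 else Equiv.swap 1 2) with hf
    have h1 : f (IsFreeGroup.of s) = Equiv.swap 0 1 := by
      rw [hf, IsFreeGroup.lift_of]; simp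
    have h2 : f (IsFreeGroup.of t) = Equiv.swap 1 2 := by
      rw [hf, IsFreeGroup.lift_of]; simp [hst.symm]
    have h3 := (hcomm (IsFreeGroup.of s) (IsFreeGroup.of t)).map f
    rw [h1, h2] at h3
    exact noncomm3 h3
  · push_neg at hs
    rcases isEmpty_or_nonempty (IsFreeGroup.Generators H) with he | ⟨⟨s⟩⟩
    · refine ⟨1, fun h => ⟨0, ?_⟩⟩
      have h4 := isFreeGroup_closure_range H
      rw [Set.range_eq_empty, Subgroup.closure_empty] at h4
      have h5 : h ∈ (⊥ : Subgroup H) := h4 ▸ Subgroup.mem_top h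
      simpa using h5
    · refine ⟨IsFreeGroup.of s, fun h => ?_⟩
      have hmem : h ∈ Subgroup.zpowers (IsFreeGroup.of s) := by
        have h6 : h ∈ Subgroup.closure (Set.range (IsFreeGroup.of :
            IsFreeGroup.Generators H → H)) :=
          (isFreeGroup_closure_range H) ▸ Subgroup.mem_top h
        refine (Subgroup.closure_le _).mpr ?_ h6
        rintro _ ⟨t, rfl⟩
        rw [hs t s]
        exact Subgroup.mem_zpowers _
      obtain ⟨n, hn⟩ := hmem
      exact ⟨n, hn.symm⟩

lemma commute_of_gen {α : Type*} [DecidableEq α] (a : α) (c : FreeGroup α)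
    (h : Commute c (FreeGroup.of a)) : ∃ n : ℤ, c = FreeGroup.of a ^ n := by
  set z := FreeGroup.of a with hz_def
  set K := Subgroup.closure ({c, z} : Set (FreeGroup α)) with hK
  have hc : c ∈ K := Subgroup.subset_closure (by simp)
  have hz : z ∈ K := Subgroup.subset_closure (by simp)
  have hcomm : ∀ x y : K, Commute x y := by
    rintro ⟨x, hx⟩ ⟨y, hy⟩
    have : Commute x y := by
      refine Subgroup.closure_induction₂
        (p := fun u v _ _ => Commute u v) ?_ ?_ ?_ ?_ ?_ ?_ ?_ hx hy
      · rintro u v (rfl | rfl) (rfl | rfl)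
        · exact Commute.refl _
        · exact h
        · exact h.symm
        · exact Commute.refl _
      · exact fun x hx => Commute.one_left x
      · exact fun x hx => Commute.one_right x
      · exact fun x y z _ _ _ h1 h2 => h1.mul_left h2
      · exact fun y z x _ _ _ h1 h2 => h1.mul_right h2
      · exact fun x y _ _ h1 => h1.inv_left
      · exact fun x y _ _ h1 => h1.inv_right
    exact Subtype.ext this
  have : IsFreeGroup K := inferInstance
  obtain ⟨d, hd⟩ := exists_zpow_of_comm K hcomm
  obtain ⟨k, hk⟩ := hd ⟨z, hz⟩
  obtain ⟨m, hm⟩ := hd ⟨c, hc⟩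
  have hk' : z = (d : FreeGroup α) ^ k := by
    have := congrArg (Subtype.val) hk
    simpa using this
  have hm' : c = (d : FreeGroup α) ^ m := by
    have := congrArg (Subtype.val) hm
    simpa using this
  -- exponent sum homomorphism
  set π : FreeGroup α →* Multiplicative ℤ :=
    FreeGroup.lift (fun x => if x = a then Multiplicative.ofAdd (1 : ℤ) else 1) with hπ
  have hπz : π z = Multiplicative.ofAdd (1 : ℤ) := by
    rw [hz_def, hπ, FreeGroup.lift_apply_of, if_pos rfl]
  have hπd : π ((d : FreeGroup α) ^ k) = (π (d : FreeGroup α)) ^ k := map_zpow π _ k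
  have hmul : k * Multiplicative.toAdd (π (d : FreeGroup α)) = 1 := by
    have := hπz
    rw [hk', hπd] at this
    have h2 := congrArg Multiplicative.toAdd this
    simpa [toAdd_zpow, smul_eq_mul, mul_comm] using h2
  have hku : k = 1 ∨ k = -1 := by
    have : IsUnit k := IsUnit.of_mul_eq_one _ hmul
    exact Int.isUnit_iff.mp this
  have hd_eq : (d : FreeGroup α) = z ^ k := by
    rcases hku with rfl | rfl
    · simpa using hk'.symm
    · rw [hk']
      group
  refine ⟨k * m, ?_⟩
  rw [hm', hd_eq, ← zpow_mul]

/-- Retraction of `Gam` onto the free factor `Σ`, killing the `e`-generators. -/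
def rho (g b p : ℕ) : Gam g b p →* Gam g b p :=
  FreeGroup.lift fun x => match x with
    | GenB.x i => FreeGroup.of (GenB.x i)
    | GenB.y i => FreeGroup.of (GenB.y i)
    | GenB.z l => FreeGroup.of (GenB.z l)
    | GenB.t k => FreeGroup.of (GenB.t k)
    | GenB.e _ => 1

lemma rho_mem (g b p : ℕ) (u : Gam g b p) : rho g b p u ∈ SigSub g b p := by
  induction u using FreeGroup.induction_on with
  | C1 => simp [map_one, one_mem]
  | of x =>
      have hp : ∀ x, rho g b p (FreeGroup.of x) ∈ SigSub g b p := by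
        intro x
        rw [rho, FreeGroup.lift_apply_of]
        cases x with
        | x i => exact Subgroup.subset_closure (Or.inl ⟨i, rfl⟩)
        | y i => exact Subgroup.subset_closure (Or.inr (Or.inl ⟨i, rfl⟩))
        | z l => exact Subgroup.subset_closure (Or.inr (Or.inr (Or.inl ⟨l, rfl⟩)))
        | t k => exact Subgroup.subset_closure (Or.inr (Or.inr (Or.inr ⟨k, rfl⟩)))
        | e l => exact one_mem _
      exact hp x
  | inv_of x hx => rw [map_inv]; exact inv_mem hx
  | mul x y hx hy => rw [map_mul]; exact mul_mem hx hy

lemma rho_fix (g b p : ℕ) {u : Gam g b p} (hu : u ∈ SigSub g b p) :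
    rho g b p u = u := by
  refine Subgroup.closure_induction (p := fun v _ => rho g b p v = v) ?_ ?_ ?_ ?_ hu
  · rintro v (⟨i, rfl⟩ | ⟨i, rfl⟩ | ⟨l, rfl⟩ | ⟨k, rfl⟩) <;>
      simp only [Xb, Yb, Zb, Tb, rho, FreeGroup.lift_apply_of]
  · exact map_one _
  · intro x y _ _ h1 h2; rw [map_mul, h1, h2]
  · intro x _ h1; rw [map_inv, h1]


/-- **(Paper, Section 2)**: let `b ≥ 2`, `φ ∈ AM_{g,b,p}` and
`l ∈ {1,…,b-1}`.  Then there is `w_l ∈ Σ_{g,b,p}` with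
`(z_l⁻¹)^φ = w_l⁻¹ z_l⁻¹ w_l`, and for any such `w_l` one has
`e_l^φ ∈ w_l⁻¹⟨z_l⟩e_l`, i.e. `e_l^φ = w_l⁻¹ z_l^r e_l` for some `r ∈ ℤ`. -/
theorem boundary_conjugator (g b p : ℕ) (hb : 2 ≤ b)
    (φ : Gam g b p ≃* Gam g b p) (hφ : IsAMb φ) (l : Fin (b - 1)) :
    (∃ w ∈ SigSub g b p,
      φ ((Zb g b p l)⁻¹) = w⁻¹ * (Zb g b p l)⁻¹ * w) ∧
    ∀ w ∈ SigSub g b p,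
      φ ((Zb g b p l)⁻¹) = w⁻¹ * (Zb g b p l)⁻¹ * w →
        ∃ r : ℤ, φ (Eb g b p l) = w⁻¹ * Zb g b p l ^ r * Eb g b p l := by
  obtain ⟨hmap, -, hE, -⟩ := hφ
  set z := Zb g b p l with hz
  set E := Eb g b p l with hEdef
  set v := E * (φ E)⁻¹ with hv
  have hEl := hE l
  -- φ(z⁻¹) = v⁻¹ z⁻¹ v
  have hconj : φ (z⁻¹) = v⁻¹ * z⁻¹ * v := by
    have h1 : (φ E)⁻¹ * φ (z⁻¹) * φ E = E⁻¹ * z⁻¹ * E := by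
      rw [← map_inv, ← map_mul, ← map_mul]; exact hEl
    have h2 : φ (z⁻¹) = (φ E) * (E⁻¹ * z⁻¹ * E) * (φ E)⁻¹ := by
      rw [← h1]; group
    rw [h2, hv]; group
  -- φ(z⁻¹) ∈ Σ
  have hzmem : z⁻¹ ∈ SigSub g b p :=
    inv_mem (Subgroup.subset_closure (Or.inr (Or.inr (Or.inl ⟨l, rfl⟩))))
  have hφz : φ (z⁻¹) ∈ SigSub g b p := by
    rw [← hmap]
    exact ⟨z⁻¹, hzmem, rfl⟩
  have hρz : rho g b p z = z := by
    rw [hz, Zb, rho, FreeGroup.lift_apply_of]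
  -- applying ρ to hconj
  have hw0 : φ (z⁻¹) = (rho g b p v)⁻¹ * z⁻¹ * rho g b p v := by
    conv_lhs => rw [← rho_fix g b p hφz, hconj]
    rw [map_mul, map_mul, map_inv, map_inv, hρz]
  constructor
  · exact ⟨rho g b p v, rho_mem g b p v, hw0⟩
  · intro w hwmem hw
    -- v w⁻¹ commutes with z
    have hcz : Commute (v * w⁻¹) (z⁻¹) := by
      have h3 : v⁻¹ * z⁻¹ * v = w⁻¹ * z⁻¹ * w := by rw [← hconj, hw]
      have h4 : z⁻¹ * (v * w⁻¹) = (v * w⁻¹) * z⁻¹ := by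
        calc z⁻¹ * (v * w⁻¹) = v * (v⁻¹ * z⁻¹ * v) * w⁻¹ := by group
        _ = v * (w⁻¹ * z⁻¹ * w) * w⁻¹ := by rw [h3]
        _ = (v * w⁻¹) * z⁻¹ := by group
      exact h4.symm
    have hcz' : Commute (v * w⁻¹) z := by
      have := hcz.inv_right
      rwa [inv_inv] at this
    obtain ⟨n, hn⟩ := commute_of_gen (GenB.z l) (v * w⁻¹) (by rwa [hz, Zb] at hcz')
    refine ⟨-n, ?_⟩
    have hn' : v * w⁻¹ = z ^ n := by rwa [hz, Zb]
    have h5 : E * (φ E)⁻¹ * w⁻¹ = z ^ n := by rw [← hn']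
    have h6 : φ E = w⁻¹ * (z ^ n)⁻¹ * E := by
      rw [← h5]; group
    rw [h6, ← zpow_neg]

end Paper
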